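/- Fix ε > 0 and let p(z) = z⁴ + (1+ε)z³ - (1/t)(z² - z) + √(2ε+ε²) for a nonzero complex number t. Suppose p has roots z₀ = r e^{iθ} (r > 0) and -1/z̄₀ together with two further roots z₁, z₂. Then, with w = r - 1/r + e^{iθ}, the relation e^{2iθ}(|w|² + 1) + ε e^{iθ} w - √(2ε+ε²) e^{-iθ}(w - 2cos θ) = 0 holds. -/

import Mathlib

open Complex

/-- Vieta elimination: if `p(z) = z⁴ + (1+ε)z³ - (1/t)(z²-z) + √(2ε+ε²)` has roots
`z₀ = r e^{iθ}` and `-1/z̄₀` together with `z₁, z₂`, then with `w = r - 1/r + e^{iθ}` the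
relation `e^{2iθ}(|w|²+1) + ε e^{iθ} w - √(2ε+ε²) e^{-iθ}(w - 2cos θ) = 0` holds. -/
theorem stmt5 (ε : ℝ) (hε : 0 < ε) (t : ℂ) (ht : t ≠ 0)
    (r θ : ℝ) (hr : 0 < r) (z₀ z₁ z₂ : ℂ)
    (hz₀ : z₀ = (r : ℂ) * Complex.exp (θ * Complex.I))
    (hfact : ∀ z : ℂ,
      z ^ 4 + (1 + (ε : ℂ)) * z ^ 3 - (1 / t) * (z ^ 2 - z)
          + (Real.sqrt (2 * ε + ε ^ 2) : ℂ)
        = (z - z₀) * (z - (-1 / starRingEnd ℂ z₀)) * (z - z₁) * (z - z₂)) :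
    Complex.exp (2 * θ * Complex.I) *
        ((‖(r : ℂ) - 1 / (r : ℂ) + Complex.exp (θ * Complex.I)‖ : ℝ) ^ 2 + 1)
      + (ε : ℂ) * Complex.exp (θ * Complex.I) *
          ((r : ℂ) - 1 / (r : ℂ) + Complex.exp (θ * Complex.I))
      - (Real.sqrt (2 * ε + ε ^ 2) : ℂ) * Complex.exp (-θ * Complex.I) *
          (((r : ℂ) - 1 / (r : ℂ) + Complex.exp (θ * Complex.I)) - 2 * (Real.cos θ : ℂ))
      = 0 := by
  have hu : Complex.exp (θ * Complex.I) ≠ 0 := Complex.exp_ne_zero _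
  have hr0 : (r : ℂ) ≠ 0 := ofReal_ne_zero.2 hr.ne'
  have hv : Complex.exp (-θ * Complex.I) = (Complex.exp (θ * Complex.I))⁻¹ := by
    rw [← Complex.exp_neg]; ring_nf
  have h2u : Complex.exp (2 * θ * Complex.I) = (Complex.exp (θ * Complex.I)) ^ 2 := by
    rw [show (2:ℂ)*θ*Complex.I = (2:ℕ)*((θ:ℂ)*Complex.I) by push_cast; ring,
      Complex.exp_nat_mul]
  have hcu : (starRingEnd ℂ) (Complex.exp ((θ:ℂ)*Complex.I)) = (Complex.exp ((θ:ℂ)*Complex.I))⁻¹ := by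
    rw [← Complex.exp_conj, show (starRingEnd ℂ) ((θ:ℂ)*Complex.I) = -((θ:ℂ)*Complex.I) by simp,
      Complex.exp_neg]
  set u := Complex.exp ((θ:ℂ) * Complex.I) with hu_def
  have habs : ((‖(r : ℂ) - 1 / (r : ℂ) + u‖ : ℝ) : ℂ) ^ 2
      = ((r : ℂ) - 1 / (r : ℂ) + u) * ((r:ℂ) - 1/(r:ℂ) + u⁻¹) := by
    have hcw : (starRingEnd ℂ) ((r : ℂ) - 1 / (r : ℂ) + u) = (r:ℂ) - 1/(r:ℂ) + u⁻¹ := by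
      rw [map_add, map_sub, map_div₀, map_one, Complex.conj_ofReal, hcu]
    rw [← hcw, Complex.mul_conj, ← Complex.sq_norm]; push_cast; ring
  have hcos : ((Real.cos θ : ℝ) : ℂ) = (u + u⁻¹)/2 := by
    rw [Complex.ofReal_cos, Complex.cos, ← Complex.exp_neg, hu_def]; ring_nf
  have hb : -1 / starRingEnd ℂ z₀ = -(1/(r:ℂ)) * u := by
    rw [hz₀, map_mul, Complex.conj_ofReal, hcu]
    field_simp
  have hfact' : ∀ z : ℂ, z ^ 4 + (1 + (ε : ℂ)) * z ^ 3 - (1 / t) * (z ^ 2 - z)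
          + (Real.sqrt (2 * ε + ε ^ 2) : ℂ)
        = (z - (r:ℂ)*u) * (z - (-(1/(r:ℂ)) * u)) * (z - z₁) * (z - z₂) := by
    intro z; rw [hfact z, hb, hz₀]
  have h0 := hfact' 0
  have h1 := hfact' 1
  have hm1 := hfact' (-1)
  have h2 := hfact' 2
  have hm2 := hfact' (-2)
  have hd3 : (r:ℂ)*u + (-(1/(r:ℂ))*u) + z₁ + z₂ = -(1+ε) := by
    linear_combination (1/12:ℂ)*h2 - (1/12:ℂ)*hm2 - (1/6:ℂ)*h1 + (1/6:ℂ)*hm1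
  have hd2 : ((r:ℂ)*u)*(-(1/(r:ℂ))*u) + ((r:ℂ)*u + (-(1/(r:ℂ))*u))*(z₁+z₂) + z₁*z₂ = -(1/t) := by
    linear_combination (1/6:ℂ)*h1 + (1/6:ℂ)*hm1 - (1/6:ℂ)*h2 - (1/6:ℂ)*hm2
  have hd1 : ((r:ℂ)*u)*(-(1/(r:ℂ))*u)*(z₁+z₂) + ((r:ℂ)*u + (-(1/(r:ℂ))*u))*(z₁*z₂) = -(1/t) := by
    linear_combination (2/3:ℂ)*h1 - (2/3:ℂ)*hm1 - (1/12:ℂ)*h2 + (1/12:ℂ)*hm2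
  have hd0 : ((r:ℂ)*u)*(-(1/(r:ℂ))*u)*(z₁*z₂) = (Real.sqrt (2*ε+ε^2) : ℂ) := by
    linear_combination -h0
  set A := (r:ℂ)*u + (-(1/(r:ℂ))*u) with hA
  set B := ((r:ℂ)*u)*(-(1/(r:ℂ))*u) with hB
  have hF : B^2 + B*(B - A)*(A + 1 + ε) + (1 - A)*(Real.sqrt (2*ε+ε^2):ℂ) = 0 := by
    linear_combination B*hd2 - B*hd1 + B*(B-A)*hd3 + (A-1)*hd0
  have hBval : B = -u^2 := by rw [hB]; field_simp
  have hAval : A = ((r:ℂ) - 1/(r:ℂ))*u := by rw [hA]; ring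
  rw [hBval, hAval] at hF
  have hinv : u * u⁻¹ = 1 := mul_inv_cancel₀ hu
  rw [h2u, habs, hcos, hv]
  refine mul_left_cancel₀ (pow_ne_zero 2 hu) ?_
  rw [mul_zero]
  linear_combination hF + ((Real.sqrt (2*ε+ε^2):ℂ) + u*(1/(r:ℂ))*(Real.sqrt (2*ε+ε^2):ℂ)
    - u*(r:ℂ)*(Real.sqrt (2*ε+ε^2):ℂ) + u*u⁻¹*(Real.sqrt (2*ε+ε^2):ℂ)
    - u^3*(1/(r:ℂ)) + u^3*(r:ℂ) + u^4) * hinv
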